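/- arXiv:2512.14886 — 3 statements merged into one kernel-verified Lean document; each statement's English description precedes it below -/
import Mathlib

section
/- Every non-separable bigraph with bipartition (X,Y) admits a canonical ordering; that is, the vertices of X and Y can be ordered x_1,…,x_α and y_1,…,y_β respectively so that N(x_1) ⊇ N(x_2) ⊇ ⋯ ⊇ N(x_α) and N(y_1) ⊆ N(y_2) ⊆ ⋯ ⊆ N(y_β). -/
universe u

/-! ## Basic unsigned notions for bipartite graphs -/

/-- `G` has an induced cycle of length at least 6 (signs, if any, are arbitrary). -/
def HasLongInducedCycle {V : Type u} (G : SimpleGraph V) : Prop :=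
  ∃ n : ℕ, 6 ≤ n ∧ ∃ f : ZMod n → V, Function.Injective f ∧
    ∀ i j : ZMod n, G.Adj (f i) (f j) ↔ (j = i + 1 ∨ i = j + 1)

/-- A graph is separable if it contains an induced `2K₂`. -/
def IsSeparableGraph {V : Type u} (G : SimpleGraph V) : Prop :=
  ∃ a b c d : V, [a, b, c, d].Pairwise (· ≠ ·) ∧
    G.Adj a b ∧ G.Adj c d ∧ ¬ G.Adj a c ∧ ¬ G.Adj a d ∧ ¬ G.Adj b c ∧ ¬ G.Adj b d

/-- An edge `ab` of a bipartite graph is simplicial if every vertex of `N(a) - {b}`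
is adjacent to every vertex of `N(b) - {a}`. -/
def SimplicialEdge {V : Type u} (G : SimpleGraph V) (a b : V) : Prop :=
  G.Adj a b ∧ ∀ c ∈ G.neighborSet a \ {b}, ∀ d ∈ G.neighborSet b \ {a}, G.Adj c d

/-- A canonical ordering of a bigraph with bipartition given by `side`
(`X` is the `side = true` part, `Y` the `side = false` part): the neighbourhoods of
the `x`'s are decreasing and those of the `y`'s are increasing. -/
def IsCanonicalOrdering {V : Type u} (G : SimpleGraph V) (side : V → Bool)
    {α β : ℕ} (x : Fin α → V) (y : Fin β → V) : Prop :=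
  Function.Injective x ∧ Function.Injective y ∧
  (∀ w : V, side w = true ↔ w ∈ Set.range x) ∧
  (∀ w : V, side w = false ↔ w ∈ Set.range y) ∧
  (∀ i j : Fin α, i ≤ j → G.neighborSet (x j) ⊆ G.neighborSet (x i)) ∧
  (∀ i j : Fin β, i ≤ j → G.neighborSet (y i) ⊆ G.neighborSet (y j))

/-- `H` is a non-trivial (i.e. containing at least one edge) connected component
of `G - S`. -/
def IsNontrivialComponentOf {V : Type u} (G : SimpleGraph V) (S H : Set V) : Prop :=
  H ⊆ Sᶜ ∧ (G.induce H).Connected ∧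
  (∀ a ∈ H, ∀ b ∈ Sᶜ, G.Adj a b → b ∈ H) ∧
  (∃ a ∈ H, ∃ b ∈ H, G.Adj a b)

/-- `S` minimally separates the non-trivial components `H` and `H'` of `G - S`:
every vertex of `S` has a neighbour in `H` and a neighbour in `H'`. -/
def MinimallySeparates {V : Type u} (G : SimpleGraph V) (S H H' : Set V) : Prop :=
  IsNontrivialComponentOf G S H ∧ IsNontrivialComponentOf G S H' ∧ H ≠ H' ∧
  ∀ s ∈ S, (∃ a ∈ H, G.Adj s a) ∧ (∃ a ∈ H', G.Adj s a)

/-! ## Signed bigraphs -/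

/-- A signed bigraph: a bipartite graph (with bipartition recorded by `side`)
whose edges carry a sign (`true` = positive, `false` = negative). -/
structure SignedBigraph (V : Type u) where
  graph : SimpleGraph V
  sign : V → V → Bool
  sign_symm : ∀ a b : V, sign a b = sign b a
  side : V → Bool
  bipartite : ∀ ⦃a b : V⦄, graph.Adj a b → side a ≠ side b

namespace SignedBigraph

variable {V : Type u}

def Adj (G : SignedBigraph V) (a b : V) : Prop := G.graph.Adj a b

/-- `N(ab) = (N(a) ∪ N(b)) - {a, b}`. -/
def edgeNbhd (G : SignedBigraph V) (a b : V) : Set V :=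
  (G.graph.neighborSet a ∪ G.graph.neighborSet b) \ {a, b}

/-- The edge `ab` is signed simplicial: `N(ab)` induces a positive biclique. -/
def SignedSimplicial (G : SignedBigraph V) (a b : V) : Prop :=
  G.Adj a b ∧
    ∀ c ∈ G.edgeNbhd a b, ∀ d ∈ G.edgeNbhd a b,
      G.side c ≠ G.side d → (G.Adj c d ∧ G.sign c d = true)

/-- Delete a set of edges from a signed bigraph (keeping all vertices). -/
def deleteEdges (G : SignedBigraph V) (s : Set (Sym2 V)) : SignedBigraph V where
  graph := G.graph.deleteEdges s
  sign := G.sign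
  sign_symm := G.sign_symm
  side := G.side
  bipartite := by
    intro a b h
    exact G.bipartite (SimpleGraph.deleteEdges_adj.mp h).1

/-- The induced signed subgraph on a set of vertices. -/
def induce (G : SignedBigraph V) (A : Set V) : SignedBigraph A where
  graph := G.graph.induce A
  sign a b := G.sign a b
  sign_symm a b := G.sign_symm a b
  side a := G.side a
  bipartite := by
    intro a b h
    exact G.bipartite h

/-- A chordal signed bigraph: the edges can be ordered `e₁, …, e_m` so that each `eᵢ`
is a signed simplicial edge of the signed bigraph obtained by deleting `e₁, …, e_{i-1}`. -/
def IsChordal (G : SignedBigraph V) : Prop :=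
  ∃ l : List (Sym2 V), l.Nodup ∧ (∀ e, e ∈ G.graph.edgeSet ↔ e ∈ l) ∧
    ∀ (i : ℕ) (h : i < l.length), ∃ a b : V,
      l.get ⟨i, h⟩ = s(a, b) ∧
      (G.deleteEdges {e | e ∈ l.take i}).SignedSimplicial a b

/-! ## Forbidden patterns F₁ – F₆, D, long cycles -/

/-- `G` contains the all-negative 4-cycle `F₁` as an induced subgraph. -/
def HasF1 (G : SignedBigraph V) : Prop :=
  ∃ u1 u2 v1 v2 : V,
    [u1, u2, v1, v2].Pairwise (· ≠ ·) ∧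
    G.Adj u1 v1 ∧ G.Adj u1 v2 ∧ G.Adj u2 v1 ∧ G.Adj u2 v2 ∧
    ¬ G.Adj u1 u2 ∧ ¬ G.Adj v1 v2 ∧
    G.sign u1 v1 = false ∧ G.sign u1 v2 = false ∧
    G.sign u2 v1 = false ∧ G.sign u2 v2 = false

/-- `G` contains a member of `F₂` (a signed `K_{2,3}`) as an induced subgraph. -/
def HasF2 (G : SignedBigraph V) : Prop :=
  ∃ u1 u2 v1 v2 v3 : V,
    [u1, u2, v1, v2, v3].Pairwise (· ≠ ·) ∧
    G.Adj u1 v1 ∧ G.Adj u1 v2 ∧ G.Adj u1 v3 ∧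
    G.Adj u2 v1 ∧ G.Adj u2 v2 ∧ G.Adj u2 v3 ∧
    ¬ G.Adj u1 u2 ∧ ¬ G.Adj v1 v2 ∧ ¬ G.Adj v1 v3 ∧ ¬ G.Adj v2 v3 ∧
    G.sign u1 v1 = false ∧ G.sign u1 v2 = false ∧
    G.sign u2 v2 = false ∧ G.sign u2 v3 = false

/-- `G` contains a member of `F₃` (a signed `K_{2,4}`) as an induced subgraph. -/
def HasF3 (G : SignedBigraph V) : Prop :=
  ∃ u1 u2 v1 v2 v3 v4 : V,
    [u1, u2, v1, v2, v3, v4].Pairwise (· ≠ ·) ∧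
    G.Adj u1 v1 ∧ G.Adj u1 v2 ∧ G.Adj u1 v3 ∧ G.Adj u1 v4 ∧
    G.Adj u2 v1 ∧ G.Adj u2 v2 ∧ G.Adj u2 v3 ∧ G.Adj u2 v4 ∧
    ¬ G.Adj u1 u2 ∧ ¬ G.Adj v1 v2 ∧ ¬ G.Adj v1 v3 ∧ ¬ G.Adj v1 v4 ∧
    ¬ G.Adj v2 v3 ∧ ¬ G.Adj v2 v4 ∧ ¬ G.Adj v3 v4 ∧
    G.sign u1 v1 = false ∧ G.sign u1 v2 = false ∧
    G.sign u2 v3 = false ∧ G.sign u2 v4 = false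

/-- `G` contains a member of `F₄` (a signed `K_{3,3}` with negative perfect matching)
as an induced subgraph. -/
def HasF4 (G : SignedBigraph V) : Prop :=
  ∃ u1 u2 u3 v1 v2 v3 : V,
    [u1, u2, u3, v1, v2, v3].Pairwise (· ≠ ·) ∧
    G.Adj u1 v1 ∧ G.Adj u1 v2 ∧ G.Adj u1 v3 ∧
    G.Adj u2 v1 ∧ G.Adj u2 v2 ∧ G.Adj u2 v3 ∧
    G.Adj u3 v1 ∧ G.Adj u3 v2 ∧ G.Adj u3 v3 ∧
    ¬ G.Adj u1 u2 ∧ ¬ G.Adj u1 u3 ∧ ¬ G.Adj u2 u3 ∧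
    ¬ G.Adj v1 v2 ∧ ¬ G.Adj v1 v3 ∧ ¬ G.Adj v2 v3 ∧
    G.sign u1 v1 = false ∧ G.sign u2 v2 = false ∧ G.sign u3 v3 = false

/-- `G` contains a member of `F₅` as an induced subgraph. -/
def HasF5 (G : SignedBigraph V) : Prop :=
  ∃ x1 x2 x3 y1 y2 y3 : V,
    [x1, x2, x3, y1, y2, y3].Pairwise (· ≠ ·) ∧
    G.Adj x1 y1 ∧ G.Adj x1 y2 ∧ ¬ G.Adj x1 y3 ∧
    G.Adj x2 y1 ∧ G.Adj x2 y2 ∧ G.Adj x2 y3 ∧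
    G.Adj x3 y1 ∧ G.Adj x3 y2 ∧ G.Adj x3 y3 ∧
    ¬ G.Adj x1 x2 ∧ ¬ G.Adj x1 x3 ∧ ¬ G.Adj x2 x3 ∧
    ¬ G.Adj y1 y2 ∧ ¬ G.Adj y1 y3 ∧ ¬ G.Adj y2 y3 ∧
    G.sign x2 y1 = false ∧ G.sign x3 y2 = false

/-- `G` contains a member of `F₆` as an induced subgraph. -/
def HasF6 (G : SignedBigraph V) : Prop :=
  ∃ x1 x2 x3 x4 y1 y2 y3 y4 : V,
    [x1, x2, x3, x4, y1, y2, y3, y4].Pairwise (· ≠ ·) ∧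
    G.Adj x1 y1 ∧ G.Adj x1 y2 ∧ ¬ G.Adj x1 y3 ∧ ¬ G.Adj x1 y4 ∧
    G.Adj x2 y1 ∧ G.Adj x2 y2 ∧ ¬ G.Adj x2 y3 ∧ ¬ G.Adj x2 y4 ∧
    G.Adj x3 y1 ∧ G.Adj x3 y2 ∧ G.Adj x3 y3 ∧ G.Adj x3 y4 ∧
    G.Adj x4 y1 ∧ G.Adj x4 y2 ∧ G.Adj x4 y3 ∧ G.Adj x4 y4 ∧
    ¬ G.Adj x1 x2 ∧ ¬ G.Adj x1 x3 ∧ ¬ G.Adj x1 x4 ∧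
    ¬ G.Adj x2 x3 ∧ ¬ G.Adj x2 x4 ∧ ¬ G.Adj x3 x4 ∧
    ¬ G.Adj y1 y2 ∧ ¬ G.Adj y1 y3 ∧ ¬ G.Adj y1 y4 ∧
    ¬ G.Adj y2 y3 ∧ ¬ G.Adj y2 y4 ∧ ¬ G.Adj y3 y4 ∧
    G.sign x1 y1 = false ∧ G.sign x2 y1 = false ∧ G.sign x3 y2 = false ∧
    G.sign x4 y3 = false ∧ G.sign x4 y4 = false

/-- `G` contains a member of `D` (a 6-cycle `x₁y₁x₂y₃x₃y₂x₁` plus a negative chord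
`x₂y₂`) as an induced subgraph. -/
def HasD (G : SignedBigraph V) : Prop :=
  ∃ x1 x2 x3 y1 y2 y3 : V,
    [x1, x2, x3, y1, y2, y3].Pairwise (· ≠ ·) ∧
    G.Adj x1 y1 ∧ G.Adj y1 x2 ∧ G.Adj x2 y3 ∧ G.Adj y3 x3 ∧
    G.Adj x3 y2 ∧ G.Adj y2 x1 ∧
    G.Adj x2 y2 ∧ G.sign x2 y2 = false ∧
    ¬ G.Adj x1 y3 ∧ ¬ G.Adj x3 y1 ∧
    ¬ G.Adj x1 x2 ∧ ¬ G.Adj x1 x3 ∧ ¬ G.Adj x2 x3 ∧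
    ¬ G.Adj y1 y2 ∧ ¬ G.Adj y1 y3 ∧ ¬ G.Adj y2 y3

/-- `G` contains an induced signed cycle of length at least 6. -/
def HasLongCycle (G : SignedBigraph V) : Prop :=
  HasLongInducedCycle G.graph

/-! ## Minimal forbidden patterns M₁ – M₅ for complete bigraphs -/

def HasM1 (G : SignedBigraph V) : Prop := G.HasF1

def HasM2 (G : SignedBigraph V) : Prop :=
  ∃ u1 u2 v1 v2 v3 : V,
    [u1, u2, v1, v2, v3].Pairwise (· ≠ ·) ∧
    G.Adj u1 v1 ∧ G.Adj u1 v2 ∧ G.Adj u1 v3 ∧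
    G.Adj u2 v1 ∧ G.Adj u2 v2 ∧ G.Adj u2 v3 ∧
    ¬ G.Adj u1 u2 ∧ ¬ G.Adj v1 v2 ∧ ¬ G.Adj v1 v3 ∧ ¬ G.Adj v2 v3 ∧
    G.sign u1 v1 = false ∧ G.sign u1 v2 = false ∧
    G.sign u2 v2 = false ∧ G.sign u2 v3 = false ∧
    G.sign u1 v3 = true ∧ G.sign u2 v1 = true

def HasM3 (G : SignedBigraph V) : Prop :=
  ∃ u1 u2 v1 v2 v3 v4 : V,
    [u1, u2, v1, v2, v3, v4].Pairwise (· ≠ ·) ∧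
    G.Adj u1 v1 ∧ G.Adj u1 v2 ∧ G.Adj u1 v3 ∧ G.Adj u1 v4 ∧
    G.Adj u2 v1 ∧ G.Adj u2 v2 ∧ G.Adj u2 v3 ∧ G.Adj u2 v4 ∧
    ¬ G.Adj u1 u2 ∧ ¬ G.Adj v1 v2 ∧ ¬ G.Adj v1 v3 ∧ ¬ G.Adj v1 v4 ∧
    ¬ G.Adj v2 v3 ∧ ¬ G.Adj v2 v4 ∧ ¬ G.Adj v3 v4 ∧
    G.sign u1 v1 = false ∧ G.sign u1 v2 = false ∧
    G.sign u2 v3 = false ∧ G.sign u2 v4 = false ∧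
    G.sign u1 v3 = true ∧ G.sign u1 v4 = true ∧
    G.sign u2 v1 = true ∧ G.sign u2 v2 = true

def HasM4 (G : SignedBigraph V) : Prop :=
  ∃ u1 u2 u3 v1 v2 v3 : V,
    [u1, u2, u3, v1, v2, v3].Pairwise (· ≠ ·) ∧
    G.Adj u1 v1 ∧ G.Adj u1 v2 ∧ G.Adj u1 v3 ∧
    G.Adj u2 v1 ∧ G.Adj u2 v2 ∧ G.Adj u2 v3 ∧
    G.Adj u3 v1 ∧ G.Adj u3 v2 ∧ G.Adj u3 v3 ∧
    ¬ G.Adj u1 u2 ∧ ¬ G.Adj u1 u3 ∧ ¬ G.Adj u2 u3 ∧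
    ¬ G.Adj v1 v2 ∧ ¬ G.Adj v1 v3 ∧ ¬ G.Adj v2 v3 ∧
    G.sign u1 v1 = false ∧ G.sign u2 v2 = false ∧ G.sign u3 v3 = false ∧
    G.sign u1 v2 = true ∧ G.sign u1 v3 = true ∧ G.sign u2 v1 = true ∧
    G.sign u2 v3 = true ∧ G.sign u3 v1 = true ∧ G.sign u3 v2 = true

def HasM5 (G : SignedBigraph V) : Prop :=
  ∃ x1 x2 x3 y1 y2 y3 : V,
    [x1, x2, x3, y1, y2, y3].Pairwise (· ≠ ·) ∧
    G.Adj x1 y1 ∧ G.Adj x1 y2 ∧ G.Adj x1 y3 ∧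
    G.Adj x2 y1 ∧ G.Adj x2 y2 ∧ G.Adj x2 y3 ∧
    G.Adj x3 y1 ∧ G.Adj x3 y2 ∧ G.Adj x3 y3 ∧
    ¬ G.Adj x1 x2 ∧ ¬ G.Adj x1 x3 ∧ ¬ G.Adj x2 x3 ∧
    ¬ G.Adj y1 y2 ∧ ¬ G.Adj y1 y3 ∧ ¬ G.Adj y2 y3 ∧
    G.sign x1 y1 = false ∧ G.sign x1 y2 = false ∧
    G.sign x2 y2 = false ∧ G.sign x3 y3 = false ∧
    G.sign x1 y3 = true ∧ G.sign x2 y1 = true ∧ G.sign x2 y3 = true ∧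
    G.sign x3 y1 = true ∧ G.sign x3 y2 = true

/-! ## The patterns W₁ – W₆ (relativized to an ambient vertex set `A`, with the
distinguished vertices being exactly the vertices in `S`). -/

def HasW1In (G : SignedBigraph V) (A S : Set V) : Prop :=
  ∃ u y x z : V, u ∈ A ∧ y ∈ A ∧ x ∈ A ∧ z ∈ A ∧
    [u, y, x, z].Pairwise (· ≠ ·) ∧
    G.Adj u y ∧ G.Adj u z ∧ G.Adj x y ∧ G.Adj x z ∧
    ¬ G.Adj u x ∧ ¬ G.Adj y z ∧
    G.sign x y = false ∧ G.sign x z = false ∧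
    x ∈ S ∧ u ∉ S ∧ y ∉ S ∧ z ∉ S

def HasW2In (G : SignedBigraph V) (A S : Set V) : Prop :=
  ∃ u y v z p : V, u ∈ A ∧ y ∈ A ∧ v ∈ A ∧ z ∈ A ∧ p ∈ A ∧
    [u, y, v, z, p].Pairwise (· ≠ ·) ∧
    G.Adj u y ∧ G.Adj u z ∧ G.Adj v y ∧ G.Adj v z ∧ G.Adj p v ∧
    ¬ G.Adj u v ∧ ¬ G.Adj y z ∧ ¬ G.Adj p u ∧ ¬ G.Adj p y ∧ ¬ G.Adj p z ∧
    G.sign v y = false ∧ G.sign v z = false ∧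
    p ∈ S ∧ u ∉ S ∧ y ∉ S ∧ v ∉ S ∧ z ∉ S

def HasW3In (G : SignedBigraph V) (A S : Set V) : Prop :=
  ∃ u y v z p : V, u ∈ A ∧ y ∈ A ∧ v ∈ A ∧ z ∈ A ∧ p ∈ A ∧
    [u, y, v, z, p].Pairwise (· ≠ ·) ∧
    G.Adj u y ∧ G.Adj u z ∧ G.Adj v y ∧ G.Adj v z ∧ G.Adj p v ∧ G.Adj p u ∧
    ¬ G.Adj u v ∧ ¬ G.Adj y z ∧ ¬ G.Adj p y ∧ ¬ G.Adj p z ∧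
    G.sign v y = false ∧ G.sign v z = false ∧ G.sign p u = false ∧
    p ∈ S ∧ u ∉ S ∧ y ∉ S ∧ v ∉ S ∧ z ∉ S

def HasW4In (G : SignedBigraph V) (A S : Set V) : Prop :=
  ∃ u y c z p q : V, u ∈ A ∧ y ∈ A ∧ c ∈ A ∧ z ∈ A ∧ p ∈ A ∧ q ∈ A ∧
    [u, y, c, z, p, q].Pairwise (· ≠ ·) ∧
    G.Adj u y ∧ G.Adj u z ∧ G.Adj c y ∧ G.Adj c z ∧ G.Adj p c ∧ G.Adj p u ∧
    G.Adj q p ∧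
    ¬ G.Adj u c ∧ ¬ G.Adj y z ∧ ¬ G.Adj p y ∧ ¬ G.Adj p z ∧
    ¬ G.Adj q u ∧ ¬ G.Adj q y ∧ ¬ G.Adj q c ∧ ¬ G.Adj q z ∧
    G.sign c y = false ∧ G.sign c z = false ∧ G.sign p u = false ∧
    q ∈ S ∧ u ∉ S ∧ y ∉ S ∧ c ∉ S ∧ z ∉ S ∧ p ∉ S

def HasW5In (G : SignedBigraph V) (A S : Set V) : Prop :=
  ∃ u y v z x : V, u ∈ A ∧ y ∈ A ∧ v ∈ A ∧ z ∈ A ∧ x ∈ A ∧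
    [u, y, v, z, x].Pairwise (· ≠ ·) ∧
    G.Adj u y ∧ G.Adj u z ∧ G.Adj v y ∧ G.Adj v z ∧ G.Adj x v ∧ G.Adj x u ∧
    ¬ G.Adj u v ∧ ¬ G.Adj y z ∧ ¬ G.Adj x y ∧ ¬ G.Adj x z ∧
    G.sign v y = false ∧ G.sign x u = false ∧
    x ∈ S ∧ y ∈ S ∧ u ∉ S ∧ v ∉ S ∧ z ∉ S

def HasW6In (G : SignedBigraph V) (A S : Set V) : Prop :=
  ∃ u y v z x : V, u ∈ A ∧ y ∈ A ∧ v ∈ A ∧ z ∈ A ∧ x ∈ A ∧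
    [u, y, v, z, x].Pairwise (· ≠ ·) ∧
    G.Adj u y ∧ G.Adj u z ∧ G.Adj v y ∧ G.Adj v z ∧ G.Adj x v ∧
    ¬ G.Adj u v ∧ ¬ G.Adj y z ∧ ¬ G.Adj x u ∧ ¬ G.Adj x y ∧ ¬ G.Adj x z ∧
    G.sign v y = false ∧
    x ∈ S ∧ y ∈ S ∧ u ∉ S ∧ v ∉ S ∧ z ∉ S

/-! ## Tadpoles, sums and joins -/

/-- The vertex set of a tadpole with heads `w, y, z` and path vertices `x`. -/
def tadVerts {n : ℕ} (w y z : V) (x : Fin n → V) : Set V :=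
  {w, y, z} ∪ Set.range x

/-- The data `(w, y, z, x)` forms an induced tadpole in `G`:
`w, y, z, x ⟨k⟩` induce a 4-cycle whose edges `x ⟨k⟩ y` and `x ⟨k⟩ z` are negative,
together with the induced path `x ⟨k⟩, x ⟨k-1⟩, …, x 0`; the vertex `x 0` is the end
and `w, y, z` are the heads.  If `t2 = true` the tadpole is of type 2: there is
additionally a negative edge from `w` to `x ⟨k-1⟩`.
(The paper's parameter `k ≥ 1` corresponds to `k + 1` here.) -/
structure IsInducedTadpole (G : SignedBigraph V) (k : ℕ) (t2 : Bool)
    (w y z : V) (x : Fin (k + 1) → V) : Prop where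
  t2_len : t2 = true → 1 ≤ k
  inj : Function.Injective x
  w_notmem : ∀ i, w ≠ x i
  y_notmem : ∀ i, y ≠ x i
  z_notmem : ∀ i, z ≠ x i
  wy : w ≠ y
  wz : w ≠ z
  yz : y ≠ z
  adj_wy : G.Adj w y
  adj_wz : G.Adj w z
  not_adj_yz : ¬ G.Adj y z
  adj_path : ∀ i j : Fin (k + 1), G.Adj (x i) (x j) ↔ (i.1 + 1 = j.1 ∨ j.1 + 1 = i.1)
  adj_y : ∀ i : Fin (k + 1), G.Adj y (x i) ↔ i.1 = k
  adj_z : ∀ i : Fin (k + 1), G.Adj z (x i) ↔ i.1 = k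
  adj_w : ∀ i : Fin (k + 1), G.Adj w (x i) ↔ (t2 = true ∧ i.1 + 1 = k)
  sign_y : ∀ i : Fin (k + 1), i.1 = k → G.sign (x i) y = false
  sign_z : ∀ i : Fin (k + 1), i.1 = k → G.sign (x i) z = false
  sign_w : ∀ i : Fin (k + 1), t2 = true → i.1 + 1 = k → G.sign w (x i) = false

/-- `G` contains a sum of two tadpoles (identified at their ends) as an induced
subgraph. -/
def HasTadpoleSum (G : SignedBigraph V) : Prop :=
  ∃ (k k' : ℕ) (t t' : Bool) (w y z w' y' z' : V)
    (x : Fin (k + 1) → V) (x' : Fin (k' + 1) → V),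
    G.IsInducedTadpole k t w y z x ∧ G.IsInducedTadpole k' t' w' y' z' x' ∧
    x 0 = x' 0 ∧
    tadVerts w y z x ∩ tadVerts w' y' z' x' = {x 0} ∧
    ∀ a ∈ tadVerts w y z x, ∀ b ∈ tadVerts w' y' z' x',
      a ≠ x 0 → b ≠ x' 0 → ¬ G.Adj a b

/-- `G` contains a join of two tadpoles as an induced subgraph: two disjoint induced
tadpoles such that the edges between them are exactly those joining the end of each
tadpole to all vertices of the other tadpole in the opposite partite set; all these
edges are positive, except that the edge from an end to the head `w` of the other
tadpole may be of either sign when that tadpole is a member of `W₁` (i.e. has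
`k = 0` and is of type 1), in which case the ends are required to be adjacent. -/
def HasTadpoleJoin (G : SignedBigraph V) : Prop :=
  ∃ (k k' : ℕ) (t t' : Bool) (w y z w' y' z' : V)
    (x : Fin (k + 1) → V) (x' : Fin (k' + 1) → V),
    G.IsInducedTadpole k t w y z x ∧ G.IsInducedTadpole k' t' w' y' z' x' ∧
    Disjoint (tadVerts w y z x) (tadVerts w' y' z' x') ∧
    (∀ a ∈ tadVerts w y z x, ∀ b ∈ tadVerts w' y' z' x',
      (G.Adj a b ↔ ((a = x 0 ∨ b = x' 0) ∧ G.side a ≠ G.side b))) ∧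
    ((k = 0 ∧ t = false) ∨ (k' = 0 ∧ t' = false) → G.side (x 0) ≠ G.side (x' 0)) ∧
    (∀ a ∈ tadVerts w y z x, ∀ b ∈ tadVerts w' y' z' x', G.Adj a b →
      ¬ (a = x 0 ∧ b = w' ∧ k' = 0 ∧ t' = false) →
      ¬ (a = w ∧ b = x' 0 ∧ k = 0 ∧ t = false) →
      G.sign a b = true)

/-- `G` contains a member of
`ℱ = F₁ ∪ F₂ ∪ F₃ ∪ F₄ ∪ F₅ ∪ F₆ ∪ 𝒞 ∪ D ∪ 𝒮 ∪ 𝒥` as an induced subgraph. -/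
def HasForbidden (G : SignedBigraph V) : Prop :=
  G.HasF1 ∨ G.HasF2 ∨ G.HasF3 ∨ G.HasF4 ∨ G.HasF5 ∨ G.HasF6 ∨
  G.HasLongCycle ∨ G.HasD ∨ G.HasTadpoleSum ∨ G.HasTadpoleJoin

/-- `G` is `ℱ`-free. -/
def FFree (G : SignedBigraph V) : Prop := ¬ G.HasForbidden

end SignedBigraph

/-! ## Concrete complete signed bipartite graphs (for the graphs M₁ – M₅) -/

/-- The complete bipartite graph on `Fin a ⊕ Fin b`. -/
def cbsGraph (a b : ℕ) : SimpleGraph (Fin a ⊕ Fin b) where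
  Adj u v := u.isLeft ≠ v.isLeft
  symm := ⟨fun _ _ h => Ne.symm h⟩
  loopless := ⟨fun _ h => h rfl⟩

def cbsSign {a b : ℕ} (sgn : Fin a → Fin b → Bool) :
    Fin a ⊕ Fin b → Fin a ⊕ Fin b → Bool
  | Sum.inl i, Sum.inr j => sgn i j
  | Sum.inr j, Sum.inl i => sgn i j
  | _, _ => true

/-- The complete signed bipartite graph with parts `Fin a`, `Fin b`, and signs given
by `sgn`. -/
def completeSignedBigraph (a b : ℕ) (sgn : Fin a → Fin b → Bool) :
    SignedBigraph (Fin a ⊕ Fin b) where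
  graph := cbsGraph a b
  sign := cbsSign sgn
  sign_symm := by
    intro u v
    cases u <;> cases v <;> rfl
  side := Sum.isLeft
  bipartite := fun _ _ h => h

/-- `M₁`: the all-negative 4-cycle. -/
def Mgraph1 : SignedBigraph (Fin 2 ⊕ Fin 2) :=
  completeSignedBigraph 2 2 (fun _ _ => false)

/-- `M₂`. -/
def Mgraph2 : SignedBigraph (Fin 2 ⊕ Fin 3) :=
  completeSignedBigraph 2 3
    (fun i j => ! decide ((i = 0 ∧ (j = 0 ∨ j = 1)) ∨ (i = 1 ∧ (j = 1 ∨ j = 2))))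

/-- `M₃`. -/
def Mgraph3 : SignedBigraph (Fin 2 ⊕ Fin 4) :=
  completeSignedBigraph 2 4
    (fun i j => ! decide ((i = 0 ∧ (j = 0 ∨ j = 1)) ∨ (i = 1 ∧ (j = 2 ∨ j = 3))))

/-- `M₄`. -/
def Mgraph4 : SignedBigraph (Fin 3 ⊕ Fin 3) :=
  completeSignedBigraph 3 3 (fun i j => ! decide ((i : ℕ) = (j : ℕ)))

/-- `M₅`. -/
def Mgraph5 : SignedBigraph (Fin 3 ⊕ Fin 3) :=
  completeSignedBigraph 3 3
    (fun i j => ! decide ((i = 0 ∧ (j = 0 ∨ j = 1)) ∨ (i = 1 ∧ j = 1) ∨ (i = 2 ∧ j = 2)))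

lemma my_exists_sorted_enum {V : Type u} [Fintype V] (P : V → Prop) (r : V → V → Prop)
    (hrefl : ∀ v, r v v) (htrans : ∀ a b c : V, r a b → r b c → r a c)
    (htot : ∀ u v : V, P u → P v → r u v ∨ r v u) :
    ∃ (n : ℕ) (f : Fin n → V), Function.Injective f ∧
      (∀ w : V, P w ↔ w ∈ Set.range f) ∧
      ∀ i j : Fin n, i ≤ j → r (f i) (f j) := by
  classical
  let S := {v // P v}
  let r' : S → S → Prop := fun a b => r a.1 b.1
  haveI : DecidableRel r' := fun a b => Classical.dec _
  haveI : IsTotal S r' := ⟨fun a b => htot a.1 b.1 a.2 b.2⟩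
  haveI : IsTrans S r' := ⟨fun a b c => htrans a.1 b.1 c.1⟩
  let l : List S := (Finset.univ : Finset S).toList
  let l' := l.insertionSort r'
  have hperm : List.Perm l' l := List.perm_insertionSort r' l
  have hnd : l'.Nodup := hperm.nodup_iff.mpr (Finset.nodup_toList _)
  have hsorted : l'.Pairwise r' := List.pairwise_insertionSort r' l
  refine ⟨l'.length, fun i => (l'.get i).1, ?_, ?_, ?_⟩
  · intro i j hij
    exact List.nodup_iff_injective_get.mp hnd (Subtype.ext hij)
  · intro w
    constructor
    · intro hw
      have hm : (⟨w, hw⟩ : S) ∈ l' := hperm.mem_iff.mpr (by simp [l, Finset.mem_toList])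
      obtain ⟨i, hi⟩ := List.mem_iff_get.mp hm
      exact ⟨i, by simp only []; rw [hi]⟩
    · rintro ⟨i, rfl⟩
      exact (l'.get i).2
  · intro i j hij
    rcases eq_or_lt_of_le hij with rfl | hlt
    · exact hrefl _
    · exact List.pairwise_iff_get.mp hsorted i j hlt

lemma my_chain {V : Type u} (G : SimpleGraph V) (side : V → Bool)
    (hbip : ∀ ⦃a b : V⦄, G.Adj a b → side a ≠ side b)
    (hns : ¬ IsSeparableGraph G) (u v : V) (hs : side u = side v) :
    G.neighborSet u ⊆ G.neighborSet v ∨ G.neighborSet v ⊆ G.neighborSet u := by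
  by_contra h
  push_neg at h
  obtain ⟨a, ha, hav⟩ := Set.not_subset.mp h.1
  obtain ⟨b, hb, hbu⟩ := Set.not_subset.mp h.2
  rw [SimpleGraph.mem_neighborSet] at ha hb
  rw [SimpleGraph.mem_neighborSet] at hav hbu
  have hua : u ≠ a := G.ne_of_adj ha
  have hvb : v ≠ b := G.ne_of_adj hb
  have huv : u ≠ v := fun e => hav (e ▸ ha)
  have hub : u ≠ b := fun e => hbip hb (by rw [← e]; exact hs.symm)
  have hva : v ≠ a := fun e => hbip ha (by rw [← e]; exact hs)
  have hab : a ≠ b := fun e => hbu (e ▸ ha)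
  have hsab : side a = side b := by
    have h1 := hbip ha
    have h2 := hbip hb
    rw [hs] at h1
    cases hx : side v <;> cases hy : side a <;> cases hz : side b <;> simp_all
  have hnuv : ¬ G.Adj u v := fun h' => hbip h' hs
  have hnab : ¬ G.Adj a b := fun h' => hbip h' hsab
  apply hns
  refine ⟨u, a, v, b, ?_, ha, hb, hnuv, fun h' => hbu h', fun h' => hav h'.symm, hnab⟩
  simp [List.pairwise_cons, hua, huv, hub, hva, hva.symm, hab, hvb]

/-- every non-separable bigraph admits a canonical ordering. -/
theorem exists_canonicalOrdering
    {V : Type u} [Fintype V] (G : SimpleGraph V) (side : V → Bool)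
    (hbip : ∀ ⦃a b : V⦄, G.Adj a b → side a ≠ side b)
    (hns : ¬ IsSeparableGraph G) :
    ∃ (α β : ℕ) (x : Fin α → V) (y : Fin β → V),
      IsCanonicalOrdering G side x y := by
  classical
  obtain ⟨α, x, hxinj, hxrange, hxmono⟩ :=
    my_exists_sorted_enum (fun w => side w = true)
      (fun u v => G.neighborSet v ⊆ G.neighborSet u)
      (fun v => subset_rfl) (fun a b c h1 h2 => h2.trans h1)
      (fun u v hu hv => (my_chain G side hbip hns u v (hu.trans hv.symm)).symm)
  obtain ⟨β, y, hyinj, hyrange, hymono⟩ :=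
    my_exists_sorted_enum (fun w => side w = false)
      (fun u v => G.neighborSet u ⊆ G.neighborSet v)
      (fun v => subset_rfl) (fun a b c h1 h2 => h1.trans h2)
      (fun u v hu hv => my_chain G side hbip hns u v (hu.trans hv.symm))
  exact ⟨α, β, x, y, hxinj, hyinj, hxrange, hyrange, hxmono, hymono⟩
end

section
/- Let Ĝ be a signed non-separable bigraph with bipartition (X,Y) and without isolated vertices, and let x_1,…,x_α, y_1,…,y_β be a canonical ordering of Ĝ. Suppose that Ĝ contains an induced subgraph belonging to Z_1 on vertices x_i, x_j, x_k, y_ℓ, y_r where x_i, x_j ∈ N(y_1). If no edge of Ĝ is signed simplicial, then Ĝ contains a graph in F_2 ∪ F_3 ∪ F_4 ∪ F_5 as an induced subgraph. -/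
universe u

/-! ## Auxiliary lemmas for the proof of Statement 6 -/

section Z1Helpers

variable {V : Type u}

private lemma z1_bool_eq_false {b : Bool} (h : b ≠ true) : b = false := by
  cases b <;> simp_all

private lemma z1_bool_eq_true {b : Bool} (h : b ≠ false) : b = true := by
  cases b <;> simp_all

private lemma z1_pw6 {a1 a2 a3 a4 a5 a6 : V}
    (h1 : a1 ≠ a2) (h2 : a1 ≠ a3) (h3 : a1 ≠ a4) (h4 : a1 ≠ a5) (h5 : a1 ≠ a6)
    (h6 : a2 ≠ a3) (h7 : a2 ≠ a4) (h8 : a2 ≠ a5) (h9 : a2 ≠ a6)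
    (h10 : a3 ≠ a4) (h11 : a3 ≠ a5) (h12 : a3 ≠ a6)
    (h13 : a4 ≠ a5) (h14 : a4 ≠ a6) (h15 : a5 ≠ a6) :
    [a1,a2,a3,a4,a5,a6].Pairwise (· ≠ ·) := by
  simp_all [List.pairwise_cons]

lemma SignedBigraph.z1_adj_symm (G : SignedBigraph V) {a b : V} (h : G.Adj a b) : G.Adj b a :=
  SimpleGraph.Adj.symm h

lemma SignedBigraph.z1_not_adj (G : SignedBigraph V) {a b : V} (h : G.side a = G.side b) :
    ¬ G.Adj a b := fun hadj => G.bipartite hadj h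

/-- Failure of signed simpliciality of an edge `uw` (with `u` on the `X`-side) yields a
pair `(xx, yy)` with `xx` a neighbour of `w`, `yy` a neighbour of `u`, such that `xx yy`
is not a positive edge. -/
lemma SignedBigraph.z1_mine (G : SignedBigraph V) {u w : V}
    (hadj : G.Adj u w) (hu : G.side u = true) (hw : G.side w = false)
    (h : ¬ G.SignedSimplicial u w) :
    ∃ xx yy : V, G.Adj w xx ∧ xx ≠ u ∧ G.Adj u yy ∧ yy ≠ w ∧
      (G.Adj xx yy → G.sign xx yy = false) := by
  have hB : ¬ ∀ c ∈ G.edgeNbhd u w, ∀ d ∈ G.edgeNbhd u w,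
      G.side c ≠ G.side d → (G.Adj c d ∧ G.sign c d = true) :=
    fun hb => h ⟨hadj, hb⟩
  push_neg at hB
  obtain ⟨c, hc, d, hd, hcd, hfail⟩ := hB
  simp only [SignedBigraph.edgeNbhd, Set.mem_diff, Set.mem_union,
    SimpleGraph.mem_neighborSet, Set.mem_insert_iff, Set.mem_singleton_iff, not_or] at hc hd
  cases hsc : G.side c with
  | true =>
      have hcw : G.Adj w c := by
        rcases hc.1 with h1 | h1
        · exact absurd (hu.trans hsc.symm) (G.bipartite h1)
        · exact h1
      have hsd : G.side d = false := z1_bool_eq_false (fun hh => hcd (by rw [hsc, hh]))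
      have hdu : G.Adj u d := by
        rcases hd.1 with h1 | h1
        · exact h1
        · exact absurd (hw.trans hsd.symm) (G.bipartite h1)
      exact ⟨c, d, hcw, hc.2.1, hdu, hd.2.2, fun hh => z1_bool_eq_false (hfail hh)⟩
  | false =>
      have hsd : G.side d = true := z1_bool_eq_true (fun hh => hcd (by rw [hsc, hh]))
      have hcu : G.Adj u c := by
        rcases hc.1 with h1 | h1
        · exact h1
        · exact absurd (hw.trans hsc.symm) (G.bipartite h1)
      have hdw : G.Adj w d := by
        rcases hd.1 with h1 | h1
        · exact absurd (hu.trans hsd.symm) (G.bipartite h1)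
        · exact h1
      refine ⟨d, c, hdw, hd.2.1, hcu, hc.2.2, fun hh => ?_⟩
      rw [G.sign_symm d c]
      exact z1_bool_eq_false (hfail (G.z1_adj_symm hh))

end Z1Helpers

open SignedBigraph in
/-- Lemma 3.3: if a signed non-separable bigraph without isolated
vertices and without signed simplicial edges contains a member of `Z₁` induced by
`xᵢ, xⱼ, xₖ, yₗ, y_r` with `xᵢ, xⱼ ∈ N(y₁)`, then it contains a member of
`F₂ ∪ F₃ ∪ F₄ ∪ F₅` as an induced subgraph. -/
theorem hasF_of_Z1
    {V : Type u} (G : SignedBigraph V)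
    (hns : ¬ IsSeparableGraph G.graph)
    (hiso : ∀ v : V, ∃ w : V, G.Adj v w)
    {α β : ℕ} (x : Fin α → V) (y : Fin β → V)
    (hcan : IsCanonicalOrdering G.graph G.side x y)
    (hβ : 0 < β)
    (i j k : Fin α) (l r : Fin β)
    -- xᵢ, xⱼ ∈ N(y₁)
    (hi1 : G.Adj (x i) (y ⟨0, hβ⟩)) (hj1 : G.Adj (x j) (y ⟨0, hβ⟩))
    -- the Z₁ pattern on xᵢ, xⱼ, xₖ, yₗ, y_r
    (hij : i ≠ j) (hik : i ≠ k) (hjk : j ≠ k) (hlr : l ≠ r)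
    (e1 : G.Adj (x i) (y l)) (e2 : G.Adj (x j) (y l))
    (e3 : G.Adj (x i) (y r)) (e4 : G.Adj (x j) (y r)) (e5 : G.Adj (x k) (y r))
    (ne1 : ¬ G.Adj (x k) (y l))
    (s1 : G.sign (x i) (y r) = false) (s2 : G.sign (x j) (y r) = false)
    -- no edge of G is signed simplicial
    (hss : ∀ a b : V, ¬ G.SignedSimplicial a b) :
    G.HasF2 ∨ G.HasF3 ∨ G.HasF4 ∨ G.HasF5 := by
  classical
  obtain ⟨hxinj, hyinj, hsx, hsy, hxmono, hymono⟩ := hcan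
  have sidex : ∀ m : Fin α, G.side (x m) = true := fun m => (hsx (x m)).mpr ⟨m, rfl⟩
  have sidey : ∀ m : Fin β, G.side (y m) = false := fun m => (hsy (y m)).mpr ⟨m, rfl⟩
  have nexy : ∀ u w : V, G.side u = true → G.side w = false → u ≠ w := by
    intro u w hu hw h
    rw [h, hw] at hu
    exact absurd hu (by simp)
  -- vertices adjacent to `y 0` are adjacent to every `Y`-vertex
  have yfull : ∀ u : V, G.Adj u (y ⟨0, hβ⟩) → ∀ w : V, G.side w = false → G.Adj u w := by
    intro u hu w hw
    obtain ⟨m, rfl⟩ := (hsy w).mp hw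
    have hle : (⟨0, hβ⟩ : Fin β) ≤ m := by simp [Fin.le_def]
    exact G.z1_adj_symm (hymono ⟨0, hβ⟩ m hle (G.z1_adj_symm hu))
  have afull : ∀ w : V, G.side w = false → G.Adj (x i) w := fun w hw => yfull _ hi1 w hw
  have bfull : ∀ w : V, G.side w = false → G.Adj (x j) w := fun w hw => yfull _ hj1 w hw
  have habne : x i ≠ x j := fun h => hij (hxinj h)
  have hpq : y l ≠ y r := fun h => hlr (hyinj h)
  -- a neighbour of `y r` with minimal neighbourhood
  obtain ⟨m0, hc0q, hm0max⟩ :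
      ∃ m0 : Fin α, G.Adj (x m0) (y r) ∧ ∀ m : Fin α, G.Adj (x m) (y r) → m ≤ m0 := by
    set S : Finset (Fin α) := Finset.univ.filter (fun m => G.Adj (x m) (y r)) with hS
    have hSne : S.Nonempty := ⟨k, by simp [hS, e5]⟩
    refine ⟨S.max' hSne, ?_, fun m hm => S.le_max' m (by simp [hS, hm])⟩
    have := S.max'_mem hSne
    simp [hS] at this
    exact this
  have hMsub : ∀ w : V, G.Adj w (y r) → G.side w = true →
      G.graph.neighborSet (x m0) ⊆ G.graph.neighborSet w := by
    intro w hwq hws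
    obtain ⟨m, rfl⟩ := (hsx w).mp hws
    exact hxmono m m0 (hm0max m hwq)
  have hc0p : ¬ G.Adj (x m0) (y l) := fun h => ne1 (hxmono k m0 (hm0max k e5) h)
  have hane : x i ≠ x m0 := fun h => hc0p (h ▸ e1)
  have hbne : x j ≠ x m0 := fun h => hc0p (h ▸ e2)
  -- a uniform way to produce a member of F₅
  have mkF5 : ∀ X1 X2 X3 w1 w2 w3 : V,
      G.side X1 = true → G.side X2 = true → G.side X3 = true →
      G.side w1 = false → G.side w2 = false → G.side w3 = false →
      X1 ≠ X2 → X1 ≠ X3 → X2 ≠ X3 → w1 ≠ w2 → w1 ≠ w3 → w2 ≠ w3 →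
      G.Adj X1 w1 → G.Adj X1 w2 → ¬ G.Adj X1 w3 →
      G.Adj X2 w1 → G.Adj X2 w2 → G.Adj X2 w3 →
      G.Adj X3 w1 → G.Adj X3 w2 → G.Adj X3 w3 →
      G.sign X2 w1 = false → G.sign X3 w2 = false → G.HasF5 := by
    intro X1 X2 X3 w1 w2 w3 sX1 sX2 sX3 t1 t2 t3 d12 d13 d23 f12 f13 f23
      a11 a12 a13 a21 a22 a23 a31 a32 a33 g1 g2
    refine ⟨X1, X2, X3, w1, w2, w3, ?_, a11, a12, a13, a21, a22, a23, a31, a32, a33,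
      G.z1_not_adj (sX1.trans sX2.symm), G.z1_not_adj (sX1.trans sX3.symm),
      G.z1_not_adj (sX2.trans sX3.symm), G.z1_not_adj (t1.trans t2.symm),
      G.z1_not_adj (t1.trans t3.symm), G.z1_not_adj (t2.trans t3.symm), g1, g2⟩
    exact z1_pw6 d12 d13 (nexy _ _ sX1 t1) (nexy _ _ sX1 t2) (nexy _ _ sX1 t3)
      d23 (nexy _ _ sX2 t1) (nexy _ _ sX2 t2) (nexy _ _ sX2 t3)
      (nexy _ _ sX3 t1) (nexy _ _ sX3 t2) (nexy _ _ sX3 t3) f12 f13 f23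
  -- first mining: the edge (x m0, y r) is not signed simplicial
  obtain ⟨x1, y1, hqx1, hx1c0, hy1c0, hy1q, hfail1⟩ :=
    G.z1_mine hc0q (sidex m0) (sidey r) (hss _ _)
  have sx1 : G.side x1 = true :=
    z1_bool_eq_true (fun h => G.bipartite hqx1 ((sidey r).trans h.symm))
  have sy1 : G.side y1 = false :=
    z1_bool_eq_false (fun h => G.bipartite hy1c0 ((sidex m0).trans h.symm))
  have hx1q : G.Adj x1 (y r) := G.z1_adj_symm hqx1
  have hx1sub : G.graph.neighborSet (x m0) ⊆ G.graph.neighborSet x1 := hMsub x1 hx1q sx1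
  have hx1y1 : G.Adj x1 y1 := hx1sub hy1c0
  have sgn1 : G.sign x1 y1 = false := hfail1 hx1y1
  have hy1p : y1 ≠ y l := fun h => hc0p (h ▸ hy1c0)
  by_cases hx1a : x1 = x i
  · -- F₅ on {x m0, x j, x i} × {y r, y1, y l}
    rw [hx1a] at hx1y1 sgn1
    exact Or.inr (Or.inr (Or.inr (mkF5 (x m0) (x j) (x i) (y r) y1 (y l)
      (sidex m0) (sidex j) (sidex i) (sidey r) sy1 (sidey l)
      hbne.symm hane.symm (fun h => habne h.symm) hy1q.symm hpq.symm hy1p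
      hc0q hy1c0 hc0p e4 (bfull y1 sy1) e2 e3 hx1y1 e1 s2 sgn1)))
  by_cases hx1b : x1 = x j
  · -- F₅ on {x m0, x i, x j} × {y r, y1, y l}
    rw [hx1b] at hx1y1 sgn1
    exact Or.inr (Or.inr (Or.inr (mkF5 (x m0) (x i) (x j) (y r) y1 (y l)
      (sidex m0) (sidex i) (sidex j) (sidey r) sy1 (sidey l)
      hane.symm hbne.symm habne hy1q.symm hpq.symm hy1p
      hc0q hy1c0 hc0p e3 (afull y1 sy1) e1 e4 hx1y1 e2 s1 sgn1)))
  -- second mining: the edge (x1, y r) is not signed simplicial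
  obtain ⟨x2, y2, hqx2, hx2x1, hy2x1, hy2q, hfail2⟩ :=
    G.z1_mine hx1q sx1 (sidey r) (hss _ _)
  have sx2 : G.side x2 = true :=
    z1_bool_eq_true (fun h => G.bipartite hqx2 ((sidey r).trans h.symm))
  have sy2 : G.side y2 = false :=
    z1_bool_eq_false (fun h => G.bipartite hy2x1 (sx1.trans h.symm))
  by_cases hy2M : G.Adj (x m0) y2
  · -- y2 is a neighbour of x m0
    have hx2q : G.Adj x2 (y r) := G.z1_adj_symm hqx2
    have hx2sub : G.graph.neighborSet (x m0) ⊆ G.graph.neighborSet x2 := hMsub x2 hx2q sx2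
    have hx2y2 : G.Adj x2 y2 := hx2sub hy2M
    have sgn2 : G.sign x2 y2 = false := hfail2 hx2y2
    have hy2p : y2 ≠ y l := fun h => hc0p (h ▸ hy2M)
    by_cases hx2a : x2 = x i
    · -- F₅ on {x m0, x j, x i} × {y r, y2, y l}
      rw [hx2a] at hx2y2 sgn2
      exact Or.inr (Or.inr (Or.inr (mkF5 (x m0) (x j) (x i) (y r) y2 (y l)
        (sidex m0) (sidex j) (sidex i) (sidey r) sy2 (sidey l)
        hbne.symm hane.symm (fun h => habne h.symm) hy2q.symm hpq.symm hy2p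
        hc0q hy2M hc0p e4 (bfull y2 sy2) e2 e3 hx2y2 e1 s2 sgn2)))
    by_cases hx2b : x2 = x j
    · -- F₅ on {x m0, x i, x j} × {y r, y2, y l}
      rw [hx2b] at hx2y2 sgn2
      exact Or.inr (Or.inr (Or.inr (mkF5 (x m0) (x i) (x j) (y r) y2 (y l)
        (sidex m0) (sidex i) (sidex j) (sidey r) sy2 (sidey l)
        hane.symm hbne.symm habne hy2q.symm hpq.symm hy2p
        hc0q hy2M hc0p e3 (afull y2 sy2) e1 e4 hx2y2 e2 s1 sgn2)))
    by_cases hy21 : y2 = y1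
    · -- F₃ on {y r, y1} × {x i, x j, x1, x2}
      rw [hy21] at hx2y2 sgn2
      refine Or.inr (Or.inl ⟨y r, y1, x i, x j, x1, x2, ?_,
        G.z1_adj_symm e3, G.z1_adj_symm e4, hqx1, hqx2,
        G.z1_adj_symm (afull y1 sy1), G.z1_adj_symm (bfull y1 sy1),
        G.z1_adj_symm hx1y1, G.z1_adj_symm hx2y2,
        G.z1_not_adj ((sidey r).trans sy1.symm),
        G.z1_not_adj ((sidex i).trans (sidex j).symm),
        G.z1_not_adj ((sidex i).trans sx1.symm),
        G.z1_not_adj ((sidex i).trans sx2.symm),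
        G.z1_not_adj ((sidex j).trans sx1.symm),
        G.z1_not_adj ((sidex j).trans sx2.symm),
        G.z1_not_adj (sx1.trans sx2.symm),
        ?_, ?_, ?_, ?_⟩)
      · exact z1_pw6 hy1q.symm ((nexy _ _ (sidex i) (sidey r)).symm)
          ((nexy _ _ (sidex j) (sidey r)).symm) ((nexy _ _ sx1 (sidey r)).symm)
          ((nexy _ _ sx2 (sidey r)).symm) ((nexy _ _ (sidex i) sy1).symm)
          ((nexy _ _ (sidex j) sy1).symm) ((nexy _ _ sx1 sy1).symm)
          ((nexy _ _ sx2 sy1).symm) habne (fun h => hx1a h.symm) (fun h => hx2a h.symm)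
          (fun h => hx1b h.symm) (fun h => hx2b h.symm) hx2x1.symm
      · rw [G.sign_symm]; exact s1
      · rw [G.sign_symm]; exact s2
      · rw [G.sign_symm]; exact sgn1
      · rw [G.sign_symm]; exact sgn2
    · -- F₄ on {x i, x1, x2} × {y r, y1, y2}
      refine Or.inr (Or.inr (Or.inl ⟨x i, x1, x2, y r, y1, y2, ?_,
        e3, afull y1 sy1, afull y2 sy2,
        hx1q, hx1y1, hy2x1,
        hx2q, hx2sub hy1c0, hx2y2,
        G.z1_not_adj ((sidex i).trans sx1.symm),
        G.z1_not_adj ((sidex i).trans sx2.symm),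
        G.z1_not_adj (sx1.trans sx2.symm),
        G.z1_not_adj ((sidey r).trans sy1.symm),
        G.z1_not_adj ((sidey r).trans sy2.symm),
        G.z1_not_adj (sy1.trans sy2.symm),
        s1, sgn1, sgn2⟩))
      exact z1_pw6 (fun h => hx1a h.symm) (fun h => hx2a h.symm)
        (nexy _ _ (sidex i) (sidey r)) (nexy _ _ (sidex i) sy1) (nexy _ _ (sidex i) sy2)
        hx2x1.symm (nexy _ _ sx1 (sidey r)) (nexy _ _ sx1 sy1) (nexy _ _ sx1 sy2)
        (nexy _ _ sx2 (sidey r)) (nexy _ _ sx2 sy1) (nexy _ _ sx2 sy2)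
        hy1q.symm hy2q.symm (fun h => hy21 h.symm)
  · -- y2 is not a neighbour of x m0: F₅ on {x m0, x j, x1} × {y r, y1, y2}
    exact Or.inr (Or.inr (Or.inr (mkF5 (x m0) (x j) x1 (y r) y1 y2
      (sidex m0) (sidex j) sx1 (sidey r) sy1 sy2
      hbne.symm hx1c0.symm (fun h => hx1b h.symm) hy1q.symm hy2q.symm
      (fun h => hy2M (h ▸ hy1c0))
      hc0q hy1c0 hy2M e4 (bfull y1 sy1) (bfull y2 sy2) hx1q hx1y1 hy2x1 s2 sgn1)))
end

section
/- Let Ĝ be a signed non-separable bigraph with bipartition (X,Y) and without isolated vertices, and let x_1,…,x_α, y_1,…,y_β be a canonical ordering of Ĝ. Suppose that Ĝ contains an induced subgraph belonging to Z_2 on vertices x_i, x_j, x_k, y_ℓ, y_q, y_r where x_i, x_j ∈ N(y_1). If no edge of Ĝ is signed simplicial, then Ĝ contains a graph in F_3 ∪ F_4 ∪ F_5 ∪ F_6 as an induced subgraph. -/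
universe u

namespace SBAux

open SignedBigraph

variable {V : Type u}

private lemma pw6 {a b c d e f : V}
    (h1 : a ≠ b) (h2 : a ≠ c) (h3 : a ≠ d) (h4 : a ≠ e) (h5 : a ≠ f)
    (h6 : b ≠ c) (h7 : b ≠ d) (h8 : b ≠ e) (h9 : b ≠ f)
    (h10 : c ≠ d) (h11 : c ≠ e) (h12 : c ≠ f)
    (h13 : d ≠ e) (h14 : d ≠ f) (h15 : e ≠ f) :
    List.Pairwise (· ≠ ·) [a, b, c, d, e, f] := by
  simp_all

private lemma pw8 {a b c d e f g h : V}
    (h1 : a ≠ b) (h2 : a ≠ c) (h3 : a ≠ d) (h4 : a ≠ e) (h5 : a ≠ f) (h6 : a ≠ g) (h7 : a ≠ h)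
    (h8 : b ≠ c) (h9 : b ≠ d) (h10 : b ≠ e) (h11 : b ≠ f) (h12 : b ≠ g) (h13 : b ≠ h)
    (h14 : c ≠ d) (h15 : c ≠ e) (h16 : c ≠ f) (h17 : c ≠ g) (h18 : c ≠ h)
    (h19 : d ≠ e) (h20 : d ≠ f) (h21 : d ≠ g) (h22 : d ≠ h)
    (h23 : e ≠ f) (h24 : e ≠ g) (h25 : e ≠ h)
    (h26 : f ≠ g) (h27 : f ≠ h) (h28 : g ≠ h) :
    List.Pairwise (· ≠ ·) [a, b, c, d, e, f, g, h] := by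
  simp_all

private lemma mkF3 (G : SignedBigraph V) {u1 u2 v1 v2 v3 v4 : V}
    (su : G.side u1 = G.side u2)
    (sv12 : G.side v1 = G.side v2) (sv13 : G.side v1 = G.side v3) (sv14 : G.side v1 = G.side v4)
    (suv : G.side u1 ≠ G.side v1)
    (hu : u1 ≠ u2)
    (k12 : v1 ≠ v2) (k13 : v1 ≠ v3) (k14 : v1 ≠ v4)
    (k23 : v2 ≠ v3) (k24 : v2 ≠ v4) (k34 : v3 ≠ v4)
    (a11 : G.Adj u1 v1) (a12 : G.Adj u1 v2) (a13 : G.Adj u1 v3) (a14 : G.Adj u1 v4)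
    (a21 : G.Adj u2 v1) (a22 : G.Adj u2 v2) (a23 : G.Adj u2 v3) (a24 : G.Adj u2 v4)
    (g1 : G.sign u1 v1 = false) (g2 : G.sign u1 v2 = false)
    (g3 : G.sign u2 v3 = false) (g4 : G.sign u2 v4 = false) :
    G.HasF3 := by
  have nadj : ∀ a b : V, G.side a = G.side b → ¬ G.Adj a b := fun a b h hadj => G.bipartite hadj h
  have necr : ∀ a b : V, G.side a = G.side u1 → G.side b = G.side v1 → a ≠ b :=
    fun a b ha hb hab => suv (by rw [← ha, hab, hb])
  exact ⟨u1, u2, v1, v2, v3, v4,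
    pw6 hu (necr _ _ rfl rfl) (necr _ _ rfl sv12.symm) (necr _ _ rfl sv13.symm)
      (necr _ _ rfl sv14.symm)
      (necr _ _ su.symm rfl) (necr _ _ su.symm sv12.symm) (necr _ _ su.symm sv13.symm)
      (necr _ _ su.symm sv14.symm)
      k12 k13 k14 k23 k24 k34,
    a11, a12, a13, a14, a21, a22, a23, a24,
    nadj _ _ su, nadj _ _ sv12, nadj _ _ sv13, nadj _ _ sv14,
    nadj _ _ (sv12.symm.trans sv13), nadj _ _ (sv12.symm.trans sv14),
    nadj _ _ (sv13.symm.trans sv14),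
    g1, g2, g3, g4⟩

private lemma mkF4 (G : SignedBigraph V) {u1 u2 u3 v1 v2 v3 : V}
    (su12 : G.side u1 = G.side u2) (su13 : G.side u1 = G.side u3)
    (sv12 : G.side v1 = G.side v2) (sv13 : G.side v1 = G.side v3)
    (suv : G.side u1 ≠ G.side v1)
    (h12 : u1 ≠ u2) (h13 : u1 ≠ u3) (h23 : u2 ≠ u3)
    (k12 : v1 ≠ v2) (k13 : v1 ≠ v3) (k23 : v2 ≠ v3)
    (a11 : G.Adj u1 v1) (a12 : G.Adj u1 v2) (a13 : G.Adj u1 v3)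
    (a21 : G.Adj u2 v1) (a22 : G.Adj u2 v2) (a23 : G.Adj u2 v3)
    (a31 : G.Adj u3 v1) (a32 : G.Adj u3 v2) (a33 : G.Adj u3 v3)
    (g1 : G.sign u1 v1 = false) (g2 : G.sign u2 v2 = false) (g3 : G.sign u3 v3 = false) :
    G.HasF4 := by
  have nadj : ∀ a b : V, G.side a = G.side b → ¬ G.Adj a b := fun a b h hadj => G.bipartite hadj h
  have necr : ∀ a b : V, G.side a = G.side u1 → G.side b = G.side v1 → a ≠ b :=
    fun a b ha hb hab => suv (by rw [← ha, hab, hb])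
  exact ⟨u1, u2, u3, v1, v2, v3,
    pw6 h12 h13 (necr _ _ rfl rfl) (necr _ _ rfl sv12.symm) (necr _ _ rfl sv13.symm)
      h23 (necr _ _ su12.symm rfl) (necr _ _ su12.symm sv12.symm) (necr _ _ su12.symm sv13.symm)
      (necr _ _ su13.symm rfl) (necr _ _ su13.symm sv12.symm) (necr _ _ su13.symm sv13.symm)
      k12 k13 k23,
    a11, a12, a13, a21, a22, a23, a31, a32, a33,
    nadj _ _ su12, nadj _ _ su13, nadj _ _ (su12.symm.trans su13),
    nadj _ _ sv12, nadj _ _ sv13, nadj _ _ (sv12.symm.trans sv13),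
    g1, g2, g3⟩

private lemma mkF5 (G : SignedBigraph V) {x1 x2 x3 y1 y2 y3 : V}
    (su12 : G.side x1 = G.side x2) (su13 : G.side x1 = G.side x3)
    (sv12 : G.side y1 = G.side y2) (sv13 : G.side y1 = G.side y3)
    (suv : G.side x1 ≠ G.side y1)
    (h12 : x1 ≠ x2) (h13 : x1 ≠ x3) (h23 : x2 ≠ x3)
    (k12 : y1 ≠ y2) (k13 : y1 ≠ y3) (k23 : y2 ≠ y3)
    (a11 : G.Adj x1 y1) (a12 : G.Adj x1 y2) (na13 : ¬ G.Adj x1 y3)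
    (a21 : G.Adj x2 y1) (a22 : G.Adj x2 y2) (a23 : G.Adj x2 y3)
    (a31 : G.Adj x3 y1) (a32 : G.Adj x3 y2) (a33 : G.Adj x3 y3)
    (g1 : G.sign x2 y1 = false) (g2 : G.sign x3 y2 = false) :
    G.HasF5 := by
  have nadj : ∀ a b : V, G.side a = G.side b → ¬ G.Adj a b := fun a b h hadj => G.bipartite hadj h
  have necr : ∀ a b : V, G.side a = G.side x1 → G.side b = G.side y1 → a ≠ b :=
    fun a b ha hb hab => suv (by rw [← ha, hab, hb])
  exact ⟨x1, x2, x3, y1, y2, y3,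
    pw6 h12 h13 (necr _ _ rfl rfl) (necr _ _ rfl sv12.symm) (necr _ _ rfl sv13.symm)
      h23 (necr _ _ su12.symm rfl) (necr _ _ su12.symm sv12.symm) (necr _ _ su12.symm sv13.symm)
      (necr _ _ su13.symm rfl) (necr _ _ su13.symm sv12.symm) (necr _ _ su13.symm sv13.symm)
      k12 k13 k23,
    a11, a12, na13, a21, a22, a23, a31, a32, a33,
    nadj _ _ su12, nadj _ _ su13, nadj _ _ (su12.symm.trans su13),
    nadj _ _ sv12, nadj _ _ sv13, nadj _ _ (sv12.symm.trans sv13),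
    g1, g2⟩

private lemma mkF6 (G : SignedBigraph V) {x1 x2 x3 x4 y1 y2 y3 y4 : V}
    (sx2 : G.side x1 = G.side x2) (sx3 : G.side x1 = G.side x3) (sx4 : G.side x1 = G.side x4)
    (sy2 : G.side y1 = G.side y2) (sy3 : G.side y1 = G.side y3) (sy4 : G.side y1 = G.side y4)
    (sxy : G.side x1 ≠ G.side y1)
    (h12 : x1 ≠ x2) (h13 : x1 ≠ x3) (h14 : x1 ≠ x4)
    (h23 : x2 ≠ x3) (h24 : x2 ≠ x4) (h34 : x3 ≠ x4)
    (k12 : y1 ≠ y2) (k13 : y1 ≠ y3) (k14 : y1 ≠ y4)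
    (k23 : y2 ≠ y3) (k24 : y2 ≠ y4) (k34 : y3 ≠ y4)
    (a11 : G.Adj x1 y1) (a12 : G.Adj x1 y2) (na13 : ¬ G.Adj x1 y3) (na14 : ¬ G.Adj x1 y4)
    (a21 : G.Adj x2 y1) (a22 : G.Adj x2 y2) (na23 : ¬ G.Adj x2 y3) (na24 : ¬ G.Adj x2 y4)
    (a31 : G.Adj x3 y1) (a32 : G.Adj x3 y2) (a33 : G.Adj x3 y3) (a34 : G.Adj x3 y4)
    (a41 : G.Adj x4 y1) (a42 : G.Adj x4 y2) (a43 : G.Adj x4 y3) (a44 : G.Adj x4 y4)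
    (g1 : G.sign x1 y1 = false) (g2 : G.sign x2 y1 = false) (g3 : G.sign x3 y2 = false)
    (g4 : G.sign x4 y3 = false) (g5 : G.sign x4 y4 = false) :
    G.HasF6 := by
  have nadj : ∀ a b : V, G.side a = G.side b → ¬ G.Adj a b := fun a b h hadj => G.bipartite hadj h
  have necr : ∀ a b : V, G.side a = G.side x1 → G.side b = G.side y1 → a ≠ b :=
    fun a b ha hb hab => sxy (by rw [← ha, hab, hb])
  exact ⟨x1, x2, x3, x4, y1, y2, y3, y4,
    pw8 h12 h13 h14 (necr _ _ rfl rfl) (necr _ _ rfl sy2.symm) (necr _ _ rfl sy3.symm)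
      (necr _ _ rfl sy4.symm)
      h23 h24 (necr _ _ sx2.symm rfl) (necr _ _ sx2.symm sy2.symm) (necr _ _ sx2.symm sy3.symm)
      (necr _ _ sx2.symm sy4.symm)
      h34 (necr _ _ sx3.symm rfl) (necr _ _ sx3.symm sy2.symm) (necr _ _ sx3.symm sy3.symm)
      (necr _ _ sx3.symm sy4.symm)
      (necr _ _ sx4.symm rfl) (necr _ _ sx4.symm sy2.symm) (necr _ _ sx4.symm sy3.symm)
      (necr _ _ sx4.symm sy4.symm)
      k12 k13 k14 k23 k24 k34,
    a11, a12, na13, na14, a21, a22, na23, na24, a31, a32, a33, a34, a41, a42, a43, a44,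
    nadj _ _ sx2, nadj _ _ sx3, nadj _ _ sx4,
    nadj _ _ (sx2.symm.trans sx3), nadj _ _ (sx2.symm.trans sx4), nadj _ _ (sx3.symm.trans sx4),
    nadj _ _ sy2, nadj _ _ sy3, nadj _ _ sy4,
    nadj _ _ (sy2.symm.trans sy3), nadj _ _ (sy2.symm.trans sy4), nadj _ _ (sy3.symm.trans sy4),
    g1, g2, g3, g4, g5⟩

/-- Extract an oriented violating pair from a non-signed-simplicial edge. -/
private lemma elim (G : SignedBigraph V)
    {α β : ℕ} {x : Fin α → V} {y : Fin β → V}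
    (hxr : ∀ w, G.side w = true ↔ w ∈ Set.range x)
    (hyr : ∀ w, G.side w = false ↔ w ∈ Set.range y)
    (a : Fin α) (b : Fin β) (hab : G.Adj (x a) (y b))
    (hns : ¬ G.SignedSimplicial (x a) (y b)) :
    ∃ (s : Fin α) (t : Fin β), x s ≠ x a ∧ y t ≠ y b ∧
      G.Adj (x s) (y b) ∧ G.Adj (x a) (y t) ∧
      ¬ (G.Adj (x s) (y t) ∧ G.sign (x s) (y t) = true) := by
  have sa : G.side (x a) = true := (hxr _).2 ⟨a, rfl⟩
  have sb : G.side (y b) = false := (hyr _).2 ⟨b, rfl⟩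
  rw [SignedBigraph.SignedSimplicial] at hns
  push_neg at hns
  obtain ⟨c, hc, d, hd, hcd, hv⟩ := hns hab
  have dec : ∀ w, w ∈ G.edgeNbhd (x a) (y b) →
      (G.side w = true → ∃ s, w = x s ∧ x s ≠ x a ∧ G.Adj (x s) (y b)) ∧
      (G.side w = false → ∃ t, w = y t ∧ y t ≠ y b ∧ G.Adj (x a) (y t)) := by
    intro w hw
    obtain ⟨hw1, hw2⟩ := hw
    constructor
    · intro hwt
      obtain ⟨s, rfl⟩ := (hxr w).1 hwt
      refine ⟨s, rfl, fun h => hw2 (by simp [h]), ?_⟩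
      rcases hw1 with h | h
      · exact absurd (G.bipartite h) (by simp [sa, hwt])
      · exact SimpleGraph.Adj.symm h
    · intro hwf
      obtain ⟨t, rfl⟩ := (hyr w).1 hwf
      refine ⟨t, rfl, fun h => hw2 (by simp [h]), ?_⟩
      rcases hw1 with h | h
      · exact h
      · exact absurd (G.bipartite h) (by simp [sb, hwf])
  cases hct : G.side c
  · have hdt : G.side d = true := by
      cases h' : G.side d
      · exact absurd (hct.trans h'.symm) hcd
      · rfl
    obtain ⟨t, rfl, htne, hat⟩ := (dec c hc).2 hct
    obtain ⟨s, rfl, hsne, hsb⟩ := (dec d hd).1 hdt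
    refine ⟨s, t, hsne, htne, hsb, hat, fun hcontra =>
      hv (SimpleGraph.Adj.symm hcontra.1) ((G.sign_symm _ _).trans hcontra.2)⟩
  · have hdf : G.side d = false := by
      cases h' : G.side d
      · rfl
      · exact absurd (hct.trans h'.symm) hcd
    obtain ⟨s, rfl, hsne, hsb⟩ := (dec c hc).1 hct
    obtain ⟨t, rfl, htne, hat⟩ := (dec d hd).2 hdf
    exact ⟨s, t, hsne, htne, hsb, hat, fun hcontra => hv hcontra.1 hcontra.2⟩


private lemma key (G : SignedBigraph V)
    {α β : ℕ} (x : Fin α → V) (y : Fin β → V)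
    (hcan : IsCanonicalOrdering G.graph G.side x y)
    (hβ : 0 < β)
    (i j k : Fin α) (l q r : Fin β)
    (hi1 : G.Adj (x i) (y ⟨0, hβ⟩)) (hj1 : G.Adj (x j) (y ⟨0, hβ⟩))
    (hij : i ≠ j) (hlq : l ≠ q) (hql : q ≤ l)
    (e7 : G.Adj (x k) (y r))
    (ne1 : ¬ G.Adj (x k) (y l)) (ne2 : ¬ G.Adj (x k) (y q))
    (s1 : G.sign (x i) (y l) = false) (s2 : G.sign (x i) (y q) = false)
    (s3 : G.sign (x j) (y r) = false)
    (hss : ∀ a b : V, ¬ G.SignedSimplicial a b) :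
    G.HasF3 ∨ G.HasF4 ∨ G.HasF5 ∨ G.HasF6 := by
  obtain ⟨hxinj, hyinj, hxr, hyr, hxmono, hymono⟩ := hcan
  have sideX : ∀ m : Fin α, G.side (x m) = true := fun m => (hxr (x m)).2 ⟨m, rfl⟩
  have sideY : ∀ m : Fin β, G.side (y m) = false := fun m => (hyr (y m)).2 ⟨m, rfl⟩
  have sXX : ∀ a b : Fin α, G.side (x a) = G.side (x b) := fun a b =>
    (sideX a).trans (sideX b).symm
  have sYY : ∀ a b : Fin β, G.side (y a) = G.side (y b) := fun a b =>
    (sideY a).trans (sideY b).symm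
  have sXY : ∀ (a : Fin α) (b : Fin β), G.side (x a) ≠ G.side (y b) := fun a b h => by
    rw [sideX, sideY] at h; exact Bool.noConfusion h
  have sYX : ∀ (b : Fin β) (a : Fin α), G.side (y b) ≠ G.side (x a) :=
    fun b a h => (sXY a b) h.symm
  have nex : ∀ {a b : Fin α}, a ≠ b → x a ≠ x b := fun h h' => h (hxinj h')
  have ney : ∀ {a b : Fin β}, a ≠ b → y a ≠ y b := fun h h' => h (hyinj h')
  have sym : ∀ {a b : V}, G.Adj a b → G.Adj b a := fun h => SimpleGraph.Adj.symm h
  have sgs : ∀ (a b : V), G.sign a b = false → G.sign b a = false :=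
    fun a b h => (G.sign_symm b a).trans h
  have monoX : ∀ {a b : Fin α} {u : Fin β}, a ≤ b → G.Adj (x b) (y u) → G.Adj (x a) (y u) :=
    fun {a b u} hab h =>
      (SimpleGraph.mem_neighborSet _ _ _).1
        (hxmono a b hab ((SimpleGraph.mem_neighborSet _ _ _).2 h))
  have monoY : ∀ {u v : Fin β} {a : Fin α}, u ≤ v → G.Adj (x a) (y u) → G.Adj (x a) (y v) :=
    fun {u v a} huv h => sym
      ((SimpleGraph.mem_neighborSet _ _ _).1
        (hymono u v huv ((SimpleGraph.mem_neighborSet _ _ _).2 (sym h))))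
  have ltY : ∀ {m : Fin α} {u v : Fin β}, G.Adj (x m) (y u) → ¬ G.Adj (x m) (y v) → v < u :=
    fun h hn => lt_of_not_ge fun hle => hn (monoY hle h)
  have ltX : ∀ {a b : Fin α} {u : Fin β}, G.Adj (x a) (y u) → ¬ G.Adj (x b) (y u) → a < b :=
    fun h hn => lt_of_not_ge fun hle => hn (monoX hle h)
  have zle : ∀ u : Fin β, (⟨0, hβ⟩ : Fin β) ≤ u := fun u => Fin.le_def.2 (Nat.zero_le _)
  have compI : ∀ u : Fin β, G.Adj (x i) (y u) := fun u => monoY (zle u) hi1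
  have compJ : ∀ u : Fin β, G.Adj (x j) (y u) := fun u => monoY (zle u) hj1
  obtain ⟨k', hPk', hkmax'⟩ := Set.Finite.exists_maximalFor id
    {m : Fin α | G.Adj (x m) (y r) ∧ ¬ G.Adj (x m) (y l) ∧ ¬ G.Adj (x m) (y q)}
    (Set.toFinite _) ⟨k, ⟨e7, ne1, ne2⟩⟩
  obtain ⟨e7', ne1', ne2'⟩ := hPk'
  have hmax : ∀ m : Fin α, G.Adj (x m) (y r) → ¬ G.Adj (x m) (y l) → ¬ G.Adj (x m) (y q) →
      m ≤ k' := by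
    intro m h1 h2 h3
    by_contra h
    have hlt : k' < m := lt_of_not_ge h
    exact absurd (hkmax' ⟨h1, h2, h3⟩ hlt.le) (not_le_of_gt hlt)
  have hik' : i ≠ k' := fun h => ne1' (by rw [← h]; exact compI l)
  have hjk' : j ≠ k' := fun h => ne1' (by rw [← h]; exact compJ l)
  have hlr' : l < r := ltY e7' ne1'
  have hqr' : q < r := ltY e7' ne2'
  obtain ⟨s, t, hxs_ne, hyt_ne, hs_r, hk_t, hviol⟩ := elim G hxr hyr k' r e7' (hss _ _)
  have hsk : s ≠ k' := fun h => hxs_ne (congrArg x h)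
  have htr : t ≠ r := fun h => hyt_ne (congrArg y h)
  have hlt_t : l < t := ltY hk_t ne1'
  have hqt : q < t := ltY hk_t ne2'
  by_cases hadj : G.Adj (x s) (y t)
  · have hsgn : G.sign (x s) (y t) = false := by
      cases h : G.sign (x s) (y t)
      · rfl
      · exact absurd ⟨hadj, h⟩ hviol
    by_cases hsi : s = i
    · subst hsi
      exact Or.inr (Or.inr (Or.inl (mkF5 G (sYY l t) (sYY l r) (sXX s j) (sXX s k')
        (sYX l s) (ney hlt_t.ne) (ney hlr'.ne) (ney htr) (nex hij) (nex hik') (nex hjk')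
        (sym (compI l)) (sym (compJ l)) (fun h => ne1' (sym h))
        (sym hadj) (sym (compJ t)) (sym hk_t)
        (sym (compI r)) (sym (compJ r)) (sym e7')
        (sgs _ _ hsgn) (sgs _ _ s3))))
    by_cases hsj : s = j
    · subst hsj
      exact Or.inl (mkF3 G (sXX i s) (sYY l q) (sYY l r) (sYY l t) (sXY i l)
        (nex hij) (ney hlq) (ney hlr'.ne) (ney hlt_t.ne) (ney hqr'.ne) (ney hqt.ne)
        (ney (Ne.symm htr))
        (compI l) (compI q) (compI r) (compI t)
        (compJ l) (compJ q) (compJ r) hadj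
        s1 s2 s3 hsgn)
    by_cases hsl : G.Adj (x s) (y l)
    · exact Or.inr (Or.inr (Or.inl (mkF5 G (sXX k' s) (sXX k' j) (sYY t r) (sYY t l)
        (sXY k' t) (nex (Ne.symm hsk)) (nex (Ne.symm hjk')) (nex hsj)
        (ney htr) (ney (Ne.symm hlt_t.ne)) (ney (Ne.symm hlr'.ne))
        hk_t e7' ne1'
        hadj hs_r hsl
        (compJ t) (compJ r) (compJ l)
        hsgn s3)))
    have hsq2 : ¬ G.Adj (x s) (y q) := fun h => hsl (monoY hql h)
    by_cases hkt : G.sign (x k') (y t) = false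
    · exact Or.inr (Or.inr (Or.inr (mkF6 G (sYY q l) (sYY q r) (sYY q t)
        (sXX i j) (sXX i k') (sXX i s) (sYX q i)
        (ney (Ne.symm hlq)) (ney hqr'.ne) (ney hqt.ne) (ney hlr'.ne) (ney hlt_t.ne)
        (ney (Ne.symm htr))
        (nex hij) (nex hik') (nex (Ne.symm hsi)) (nex hjk') (nex (Ne.symm hsj))
        (nex (Ne.symm hsk))
        (sym (compI q)) (sym (compJ q)) (fun h => ne2' (sym h)) (fun h => hsq2 (sym h))
        (sym (compI l)) (sym (compJ l)) (fun h => ne1' (sym h)) (fun h => hsl (sym h))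
        (sym (compI r)) (sym (compJ r)) (sym e7') (sym hs_r)
        (sym (compI t)) (sym (compJ t)) (sym hk_t) (sym hadj)
        (sgs _ _ s2) (sgs _ _ s1) (sgs _ _ s3) (sgs _ _ hkt) (sgs _ _ hsgn))))
    · obtain ⟨a, b, hxa_ne, hyb_ne, ha_r, hs_b, hviol2⟩ := elim G hxr hyr s r hs_r (hss _ _)
      have has : a ≠ s := fun h => hxa_ne (congrArg x h)
      have hbr : b ≠ r := fun h => hyb_ne (congrArg y h)
      have hlb : l < b := ltY hs_b hsl
      have hqb : q < b := ltY hs_b hsq2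
      have hak : a ≤ k' := by
        by_contra hh
        have hk'a : k' ≤ a := (lt_of_not_ge hh).le
        have hal : ¬ G.Adj (x a) (y l) := fun h => ne1' (monoX hk'a h)
        have haq : ¬ G.Adj (x a) (y q) := fun h => ne2' (monoX hk'a h)
        exact hh (hmax a ha_r hal haq)
      have hat : G.Adj (x a) (y t) := monoX hak hk_t
      by_cases hab2 : G.Adj (x a) (y b)
      · have hsgn2 : G.sign (x a) (y b) = false := by
          cases h : G.sign (x a) (y b)
          · rfl
          · exact absurd ⟨hab2, h⟩ hviol2
        by_cases hai : a = i
        · subst hai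
          exact Or.inr (Or.inr (Or.inl (mkF5 G (sYY l b) (sYY l r) (sXX a j) (sXX a s)
            (sYX l a) (ney hlb.ne) (ney hlr'.ne) (ney hbr)
            (nex hij) (nex (Ne.symm hsi)) (nex (Ne.symm hsj))
            (sym (compI l)) (sym (compJ l)) (fun h => hsl (sym h))
            (sym hab2) (sym (compJ b)) (sym hs_b)
            (sym (compI r)) (sym (compJ r)) (sym hs_r)
            (sgs _ _ hsgn2) (sgs _ _ s3))))
        by_cases haj : a = j
        · subst haj
          exact Or.inl (mkF3 G (sXX i a) (sYY l q) (sYY l r) (sYY l b) (sXY i l)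
            (nex hij) (ney hlq) (ney hlr'.ne) (ney hlb.ne) (ney hqr'.ne) (ney hqb.ne)
            (ney (Ne.symm hbr))
            (compI l) (compI q) (compI r) (compI b)
            (compJ l) (compJ q) (compJ r) hab2
            s1 s2 s3 hsgn2)
        by_cases hbt : b = t
        · subst hbt
          have hak' : a ≠ k' := fun h => hkt (by rw [← h]; exact hsgn2)
          by_cases hal2 : G.Adj (x a) (y l)
          · exact Or.inr (Or.inr (Or.inl (mkF5 G (sXX k' a) (sXX k' j) (sYY b r) (sYY b l)
              (sXY k' b) (nex (Ne.symm hak')) (nex (Ne.symm hjk')) (nex haj)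
              (ney hbr) (ney (Ne.symm hlb.ne)) (ney (Ne.symm hlr'.ne))
              hk_t e7' ne1'
              hab2 ha_r hal2
              (compJ b) (compJ r) (compJ l)
              hsgn2 s3)))
          · have haq2 : ¬ G.Adj (x a) (y q) := fun h => hal2 (monoY hql h)
            exact Or.inr (Or.inr (Or.inr (mkF6 G (sYY q l) (sYY q r) (sYY q b)
              (sXX i j) (sXX i a) (sXX i s) (sYX q i)
              (ney (Ne.symm hlq)) (ney hqr'.ne) (ney hqb.ne) (ney hlr'.ne) (ney hlb.ne)
              (ney (Ne.symm hbr))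
              (nex hij) (nex (Ne.symm hai)) (nex (Ne.symm hsi)) (nex (Ne.symm haj))
              (nex (Ne.symm hsj)) (nex has)
              (sym (compI q)) (sym (compJ q)) (fun h => haq2 (sym h)) (fun h => hsq2 (sym h))
              (sym (compI l)) (sym (compJ l)) (fun h => hal2 (sym h)) (fun h => hsl (sym h))
              (sym (compI r)) (sym (compJ r)) (sym ha_r) (sym hs_r)
              (sym (compI b)) (sym (compJ b)) (sym hab2) (sym hadj)
              (sgs _ _ s2) (sgs _ _ s1) (sgs _ _ s3) (sgs _ _ hsgn2) (sgs _ _ hsgn))))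
        · exact Or.inr (Or.inl (mkF4 G (sYY t r) (sYY t b) (sXX s j) (sXX s a) (sYX t s)
            (ney htr) (ney (Ne.symm hbt)) (ney (Ne.symm hbr))
            (nex hsj) (nex (Ne.symm has)) (nex (Ne.symm haj))
            (sym hadj) (sym (compJ t)) (sym hat)
            (sym hs_r) (sym (compJ r)) (sym ha_r)
            (sym hs_b) (sym (compJ b)) (sym hab2)
            (sgs _ _ hsgn) (sgs _ _ s3) (sgs _ _ hsgn2)))
      · have hai : a ≠ i := fun h => hab2 (by rw [h]; exact compI b)
        have haj : a ≠ j := fun h => hab2 (by rw [h]; exact compJ b)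
        have hbt : b ≠ t := fun h => hab2 (by rw [h]; exact hat)
        exact Or.inr (Or.inr (Or.inl (mkF5 G (sXX a s) (sXX a j) (sYY t r) (sYY t b)
          (sXY a t) (nex has) (nex haj) (nex hsj)
          (ney htr) (ney (Ne.symm hbt)) (ney (Ne.symm hbr))
          hat ha_r hab2
          hadj hs_r hs_b
          (compJ t) (compJ r) (compJ b)
          hsgn s3)))
  · exfalso
    have hks : k' < s := ltX hk_t hadj
    have hsl : ¬ G.Adj (x s) (y l) := fun h => ne1' (monoX hks.le h)
    have hsq : ¬ G.Adj (x s) (y q) := fun h => ne2' (monoX hks.le h)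
    exact absurd (hmax s hs_r hsl hsq) (not_le_of_gt hks)

end SBAux


open SignedBigraph in
/-- Lemma 3.4: if a signed non-separable bigraph without isolated
vertices and without signed simplicial edges contains a member of `Z₂` induced by
`xᵢ, xⱼ, xₖ, yₗ, y_q, y_r` with `xᵢ, xⱼ ∈ N(y₁)`, then it contains a member of
`F₃ ∪ F₄ ∪ F₅ ∪ F₆` as an induced subgraph. -/
theorem hasF_of_Z2
    {V : Type u} (G : SignedBigraph V)
    (hns : ¬ IsSeparableGraph G.graph)
    (hiso : ∀ v : V, ∃ w : V, G.Adj v w)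
    {α β : ℕ} (x : Fin α → V) (y : Fin β → V)
    (hcan : IsCanonicalOrdering G.graph G.side x y)
    (hβ : 0 < β)
    (i j k : Fin α) (l q r : Fin β)
    -- xᵢ, xⱼ ∈ N(y₁)
    (hi1 : G.Adj (x i) (y ⟨0, hβ⟩)) (hj1 : G.Adj (x j) (y ⟨0, hβ⟩))
    -- the Z₂ pattern on xᵢ, xⱼ, xₖ, yₗ, y_q, y_r
    (hij : i ≠ j) (hik : i ≠ k) (hjk : j ≠ k)
    (hlq : l ≠ q) (hlr : l ≠ r) (hqr : q ≠ r)
    (e1 : G.Adj (x i) (y l)) (e2 : G.Adj (x i) (y q)) (e3 : G.Adj (x i) (y r))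
    (e4 : G.Adj (x j) (y l)) (e5 : G.Adj (x j) (y q)) (e6 : G.Adj (x j) (y r))
    (e7 : G.Adj (x k) (y r))
    (ne1 : ¬ G.Adj (x k) (y l)) (ne2 : ¬ G.Adj (x k) (y q))
    (s1 : G.sign (x i) (y l) = false) (s2 : G.sign (x i) (y q) = false)
    (s3 : G.sign (x j) (y r) = false)
    -- no edge of G is signed simplicial
    (hss : ∀ a b : V, ¬ G.SignedSimplicial a b) :
    G.HasF3 ∨ G.HasF4 ∨ G.HasF5 ∨ G.HasF6 := by
  rcases le_total q l with h | h
  · exact SBAux.key G x y hcan hβ i j k l q r hi1 hj1 hij hlq h e7 ne1 ne2 s1 s2 s3 hss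
  · exact SBAux.key G x y hcan hβ i j k q l r hi1 hj1 hij (Ne.symm hlq) h e7 ne2 ne1 s2 s1 s3 hss
end
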